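/- A k-regular graph G is fall (k+1)-colorable if and only if the square G² is properly (k+1)-colorable. -/

import Mathlib

open SimpleGraph

def IsFallColoring {V : Type*} (G : SimpleGraph V) (k : ℕ) (c : V → Fin k) : Prop :=
  (∀ u v, G.Adj u v → c u ≠ c v) ∧
  (∀ v : V, ∀ j : Fin k, j ≠ c v → ∃ w, G.Adj v w ∧ c w = j)

/-- The square of a graph: two distinct vertices are adjacent iff they are
adjacent in `G` or have a common neighbor (i.e. are at distance at most 2). -/
def SimpleGraph.square {V : Type*} (G : SimpleGraph V) : SimpleGraph V where
  Adj u v := u ≠ v ∧ (G.Adj u v ∨ ∃ w, G.Adj u w ∧ G.Adj w v)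
  symm := ⟨by
    rintro u v ⟨hne, h | ⟨w, hw1, hw2⟩⟩
    · exact ⟨hne.symm, Or.inl h.symm⟩
    · exact ⟨hne.symm, Or.inr ⟨w, hw2.symm, hw1.symm⟩⟩⟩
  loopless := ⟨fun v ⟨hne, _⟩ => hne rfl⟩

theorem regular_fall_succ_iff_square_colorable {V : Type*} [Fintype V]
    (G : SimpleGraph V) [DecidableRel G.Adj] (k : ℕ)
    (hreg : G.IsRegularOfDegree k) :
    (∃ c : V → Fin (k + 1), IsFallColoring G (k + 1) c) ↔
      (SimpleGraph.square G).Colorable (k + 1) := by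
  classical
  constructor
  · rintro ⟨c, hproper, hfall⟩
    refine ⟨SimpleGraph.Coloring.mk c ?_⟩
    rintro u v ⟨hne, hadj | ⟨w, hw1, hw2⟩⟩
    · exact hproper u v hadj
    · intro hc
      have hsub : Finset.univ.erase (c w) ⊆ (G.neighborFinset w).image c := by
        intro j hj
        obtain ⟨x, hx, hcx⟩ := hfall w j (Finset.ne_of_mem_erase hj)
        exact Finset.mem_image.2 ⟨x, (G.mem_neighborFinset w x).2 hx, hcx⟩
      have hsub2 : (G.neighborFinset w).image c ⊆ Finset.univ.erase (c w) := by
        intro j hj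
        obtain ⟨x, hx, rfl⟩ := Finset.mem_image.1 hj
        exact Finset.mem_erase.2
          ⟨fun h => hproper w x ((G.mem_neighborFinset w x).1 hx) h.symm, Finset.mem_univ _⟩
      have heq := Finset.Subset.antisymm hsub2 hsub
      have hcardN : (G.neighborFinset w).card = k := by
        rw [G.card_neighborFinset_eq_degree]; exact hreg w
      have hcard : ((G.neighborFinset w).image c).card = (G.neighborFinset w).card := by
        rw [heq, Finset.card_erase_of_mem (Finset.mem_univ _), Finset.card_univ,
          Fintype.card_fin, hcardN]
        rfl
      have hinj : Set.InjOn c (G.neighborFinset w) := Finset.card_image_iff.1 hcard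
      exact hne (hinj ((G.mem_neighborFinset w u).2 hw1.symm)
        ((G.mem_neighborFinset w v).2 hw2) hc)
  · rintro ⟨C⟩
    refine ⟨fun v => C v, fun u v h => C.valid ⟨h.ne, Or.inl h⟩, ?_⟩
    intro v j hj
    set s : Finset V := insert v (G.neighborFinset v) with hs
    have hinj : Set.InjOn (fun x => C x) s := by
      intro x hx y hy hxy
      by_contra hne
      refine C.valid (⟨hne, ?_⟩ : (SimpleGraph.square G).Adj x y) hxy
      rcases Finset.mem_insert.1 hx with rfl | hx <;>
        rcases Finset.mem_insert.1 hy with h | hy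
      · exact absurd h.symm hne
      · exact Or.inl ((G.mem_neighborFinset x y).1 hy)
      · subst h; exact Or.inl ((G.mem_neighborFinset y x).1 hx).symm
      · exact Or.inr ⟨v, ((G.mem_neighborFinset v x).1 hx).symm,
          (G.mem_neighborFinset v y).1 hy⟩
    have hcard : s.card = k + 1 := by
      rw [hs, Finset.card_insert_of_notMem (by simp), G.card_neighborFinset_eq_degree,
        hreg v]
    have himage : s.image (fun x => C x) = Finset.univ := by
      apply Finset.eq_univ_of_card
      rw [Finset.card_image_of_injOn hinj, hcard, Fintype.card_fin]
    have hj' : j ∈ s.image (fun x => C x) := himage ▸ Finset.mem_univ j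
    obtain ⟨w, hw, hcw⟩ := Finset.mem_image.1 hj'
    rcases Finset.mem_insert.1 hw with rfl | hw
    · exact absurd hcw.symm hj
    · exact ⟨w, (G.mem_neighborFinset v w).1 hw, hcw⟩
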